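/- Let (B, μ) be a weighted Banach space with B having the Radon–Nikodým property, q ∈ (1,∞), and let π be a q-test plan. Define v_π(x) := (d(e_# π̂)/dμ)(x) · ∫ γ'(t) dπ̂_x(γ,t) for μ-a.e. x. Then v_π ∈ L^q(B, μ; B) and for every nonnegative Borel function h : B → [0,∞), ∫ h |v_π|_B dμ ≤ ∫∫_0^1 h(γ_t) ‖γ'(t)‖ dt dπ(γ). -/

import Mathlib

set_option maxHeartbeats 1000000
set_option synthInstance.maxHeartbeats 400000

open MeasureTheory TopologicalSpace Set ProbabilityTheory
open scoped ENNReal NNReal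

private lemma jensen_rpow {α : Type*} [MeasurableSpace α] (m : Measure α)
    [IsProbabilityMeasure m] {F : α → ℝ≥0∞} (hF : Measurable F) {q : ℝ} (hq : 1 < q) :
    (∫⁻ a, F a ∂m) ^ q ≤ ∫⁻ a, F a ^ q ∂m := by
  have hq0 : q ≠ 0 := by linarith
  have h := ENNReal.lintegral_mul_le_Lp_mul_Lq m (Real.HolderConjugate.conjExponent hq)
    hF.aemeasurable (aemeasurable_const (b := (1:ℝ≥0∞)))
  simp only [Pi.mul_apply, mul_one, ENNReal.one_rpow, lintegral_const, measure_univ,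
    ENNReal.one_rpow] at h
  calc (∫⁻ a, F a ∂m) ^ q ≤ ((∫⁻ a, F a ^ q ∂m) ^ (1/q)) ^ q := by
        refine ENNReal.rpow_le_rpow ?_ (by linarith)
        simpa using h
    _ = ∫⁻ a, F a ^ q ∂m := by
        rw [← ENNReal.rpow_mul, one_div_mul_cancel hq0, ENNReal.rpow_one]

private lemma ofReal_norm_eq_coe_nnnorm {E : Type*} [SeminormedAddCommGroup E] (a : E) :
    ENNReal.ofReal ‖a‖ = (‖a‖₊ : ℝ≥0∞) := ENNReal.ofReal_eq_coe_nnreal _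

private lemma vf_aux {B : Type*} [NormedAddCommGroup B] [NormedSpace ℝ B] [CompleteSpace B]
    [SeparableSpace B] [MeasurableSpace B] [BorelSpace B]
    {Γ : Type*} [MeasurableSpace Γ]
    (μ : Measure B) [IsFiniteMeasure μ]
    (q : ℝ) (hq : 1 < q)
    (piH : Measure Γ) [IsProbabilityMeasure piH]
    (e : Γ → B) (he : Measurable e)
    (f : Γ → B) (hf_sm : StronglyMeasurable f)
    (Cc : ℝ) (hCc : 0 < Cc)
    (hle : Measure.map e piH ≤ ENNReal.ofReal Cc • μ)
    (henergy : ∫⁻ p, (‖f p‖₊ : ℝ≥0∞) ^ q ∂piH < ⊤)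
    (κ : B → Measure Γ) (hκprob : ∀ x, IsProbabilityMeasure (κ x))
    (hκmeas : ∀ s : Set Γ, MeasurableSet s → Measurable fun x => κ x s)
    (hκconc : ∀ᵐ x ∂(Measure.map e piH), κ x {p | e p ≠ x} = 0)
    (hκdis : ∀ s : Set Γ, MeasurableSet s → piH s = ∫⁻ x, κ x s ∂(Measure.map e piH)) :
    MemLp (fun x => ((Measure.map e piH).rnDeriv μ x).toReal • ∫ p, f p ∂(κ x))
      (ENNReal.ofReal q) μ ∧
    ∀ h : B → ℝ, Measurable h → (∀ x, 0 ≤ h x) →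
      ∫⁻ x, ENNReal.ofReal (h x *
          ‖((Measure.map e piH).rnDeriv μ x).toReal • ∫ p, f p ∂(κ x)‖) ∂μ ≤
        ∫⁻ p, ENNReal.ofReal (h (e p) * ‖f p‖) ∂piH := by
  have hq0 : (0:ℝ) ≤ q := by linarith
  have hq1 : (0:ℝ) ≤ q - 1 := by linarith
  set ν : Measure B := Measure.map e piH with hνdef
  haveI : IsProbabilityMeasure ν := Measure.isProbabilityMeasure_map he.aemeasurable
  have hf_meas : Measurable f := hf_sm.measurable
  set D : B → ℝ≥0∞ := ν.rnDeriv μ with hDdef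
  have hD_meas : Measurable D := Measure.measurable_rnDeriv ν μ
  set g : B → B := fun x => ∫ p, f p ∂(κ x) with hgdef
  set a : B → ℝ≥0∞ := fun x => ENNReal.ofReal ((D x).toReal) with hadef
  have ha_le : ∀ x, a x ≤ D x := fun x => ENNReal.ofReal_toReal_le
  -- rnDeriv bound
  have hD_le : D ≤ᵐ[μ] fun _ => ENNReal.ofReal Cc := by
    set r : ℝ≥0 := Cc.toNNReal with hrdef
    have hr : r ≠ 0 := ne_of_gt (Real.toNNReal_pos.2 hCc)
    have hrne : (r : ℝ≥0∞) ≠ 0 := by exact_mod_cast hr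
    have hsmul : ENNReal.ofReal Cc • μ = r • μ := by
      ext s
      rfl
    have h1 : ν.rnDeriv (r • μ) ≤ᵐ[r • μ] 1 :=
      Measure.rnDeriv_le_one_of_le (hsmul ▸ hle)
    have h1' : ν.rnDeriv (r • μ) ≤ᵐ[μ] 1 := by
      rw [ENNReal.smul_def] at h1
      rw [Filter.EventuallyLE, ae_iff] at h1 ⊢
      simpa [hrne] using h1
    have h2 : ν.rnDeriv (r • μ) =ᵐ[μ] r⁻¹ • ν.rnDeriv μ :=
      Measure.rnDeriv_smul_right ν μ hr
    filter_upwards [h1', h2] with x hx1 hx2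
    have hle' : (r : ℝ≥0∞)⁻¹ * D x ≤ 1 := by
      have := hx2 ▸ hx1
      simpa [ENNReal.smul_def, ENNReal.coe_inv hr] using this
    have : D x ≤ (r : ℝ≥0∞) := by
      calc D x = (r : ℝ≥0∞) * ((r : ℝ≥0∞)⁻¹ * D x) := by
            rw [← mul_assoc, ENNReal.mul_inv_cancel hrne ENNReal.coe_ne_top, one_mul]
        _ ≤ (r : ℝ≥0∞) * 1 := mul_le_mul_right hle' _
        _ = r := mul_one _
    simpa [hrdef, ENNReal.ofReal] using this
  -- kernel facts
  have hκM : Measurable κ := Measure.measurable_of_measurable_coe _ hκmeas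
  let K : Kernel B Γ := ⟨κ, hκM⟩
  haveI : IsMarkovKernel K := ⟨hκprob⟩
  have hg_sm : StronglyMeasurable g := by
    have huc : StronglyMeasurable (Function.uncurry fun (_ : B) p => f p) :=
      hf_sm.comp_measurable measurable_snd
    exact huc.integral_kernel_prod_right (κ := K)
  have hbind : piH = ν.bind κ := by
    ext s hs
    rw [Measure.bind_apply hs hκM.aemeasurable]
    exact hκdis s hs
  have hlint_bind : ∀ {F : Γ → ℝ≥0∞}, Measurable F →
      ∫⁻ p, F p ∂piH = ∫⁻ x, ∫⁻ p, F p ∂(κ x) ∂ν := by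
    intro F hF
    conv_lhs => rw [hbind]
    exact Measure.lintegral_bind hκM.aemeasurable hF.aemeasurable
  -- pointwise norm identity
  have hnorm : ∀ x, (‖(D x).toReal • g x‖₊ : ℝ≥0∞) = a x * (‖g x‖₊ : ℝ≥0∞) := by
    intro x
    rw [← ofReal_norm_eq_coe_nnnorm, ← ofReal_norm_eq_coe_nnnorm, norm_smul,
      Real.norm_of_nonneg ENNReal.toReal_nonneg, ENNReal.ofReal_mul ENNReal.toReal_nonneg]
  have hgle : ∀ x, (‖g x‖₊ : ℝ≥0∞) ≤ ∫⁻ p, (‖f p‖₊ : ℝ≥0∞) ∂(κ x) := fun x =>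
    enorm_integral_le_lintegral_enorm _
  -- withDensity comparison
  have hwd : ∀ {F : B → ℝ≥0∞}, Measurable F →
      ∫⁻ x, D x * F x ∂μ ≤ ∫⁻ x, F x ∂ν := by
    intro F hF
    have h1 := lintegral_withDensity_eq_lintegral_mul μ
      (Measure.measurable_rnDeriv ν μ) hF
    simp only [Pi.mul_apply] at h1
    rw [← h1]
    exact lintegral_mono' (Measure.withDensity_rnDeriv_le ν μ) le_rfl
  -- Jensen bound on g
  have hGq : ∫⁻ x, (‖g x‖₊ : ℝ≥0∞) ^ q ∂ν ≤ ∫⁻ p, (‖f p‖₊ : ℝ≥0∞) ^ q ∂piH := by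
    calc ∫⁻ x, (‖g x‖₊ : ℝ≥0∞) ^ q ∂ν
        ≤ ∫⁻ x, (∫⁻ p, (‖f p‖₊ : ℝ≥0∞) ∂(κ x)) ^ q ∂ν :=
          lintegral_mono fun x => ENNReal.rpow_le_rpow (hgle x) hq0
      _ ≤ ∫⁻ x, ∫⁻ p, (‖f p‖₊ : ℝ≥0∞) ^ q ∂(κ x) ∂ν := by
          refine lintegral_mono fun x => ?_
          haveI := hκprob x
          exact jensen_rpow (κ x) hf_meas.enorm hq
      _ = ∫⁻ p, (‖f p‖₊ : ℝ≥0∞) ^ q ∂piH :=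
          (hlint_bind (hf_meas.enorm.pow_const q)).symm
  constructor
  · -- Memℒp
    refine ⟨((hD_meas.ennreal_toReal.stronglyMeasurable.smul hg_sm)).aestronglyMeasurable, ?_⟩
    have hI : ∫⁻ x, (‖(D x).toReal • g x‖₊ : ℝ≥0∞) ^ q ∂μ < ⊤ := by
      have hpt : ∀ᵐ x ∂μ, (‖(D x).toReal • g x‖₊ : ℝ≥0∞) ^ q ≤
          ENNReal.ofReal Cc ^ (q - 1) * (D x * (‖g x‖₊ : ℝ≥0∞) ^ q) := by
        filter_upwards [hD_le] with x hx
        calc (‖(D x).toReal • g x‖₊ : ℝ≥0∞) ^ q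
            = a x ^ q * (‖g x‖₊ : ℝ≥0∞) ^ q := by
              rw [hnorm x, ENNReal.mul_rpow_of_nonneg _ _ hq0]
          _ = a x ^ (q - 1) * a x * (‖g x‖₊ : ℝ≥0∞) ^ q := by
              have hsplit : a x ^ q = a x ^ (q - 1) * a x := by
                conv_lhs => rw [show q = (q - 1) + 1 by ring]
                rw [ENNReal.rpow_add_of_nonneg _ _ hq1 zero_le_one, ENNReal.rpow_one]
              rw [hsplit]
          _ ≤ ENNReal.ofReal Cc ^ (q - 1) * D x * (‖g x‖₊ : ℝ≥0∞) ^ q :=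
              mul_le_mul' (mul_le_mul' (ENNReal.rpow_le_rpow ((ha_le x).trans hx) hq1)
                (ha_le x)) le_rfl
          _ = ENNReal.ofReal Cc ^ (q - 1) * (D x * (‖g x‖₊ : ℝ≥0∞) ^ q) := by
              rw [mul_assoc]
      calc ∫⁻ x, (‖(D x).toReal • g x‖₊ : ℝ≥0∞) ^ q ∂μ
          ≤ ∫⁻ x, ENNReal.ofReal Cc ^ (q - 1) * (D x * (‖g x‖₊ : ℝ≥0∞) ^ q) ∂μ :=
            lintegral_mono_ae hpt
        _ = ENNReal.ofReal Cc ^ (q - 1) * ∫⁻ x, D x * (‖g x‖₊ : ℝ≥0∞) ^ q ∂μ :=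
            lintegral_const_mul _ (hD_meas.mul (hg_sm.measurable.enorm.pow_const q))
        _ ≤ ENNReal.ofReal Cc ^ (q - 1) * ∫⁻ x, (‖g x‖₊ : ℝ≥0∞) ^ q ∂ν :=
            mul_le_mul_right (hwd (hg_sm.measurable.enorm.pow_const q)) _
        _ ≤ ENNReal.ofReal Cc ^ (q - 1) * ∫⁻ p, (‖f p‖₊ : ℝ≥0∞) ^ q ∂piH :=
            mul_le_mul_right hGq _
        _ < ⊤ := ENNReal.mul_lt_top
            (ENNReal.rpow_lt_top_of_nonneg hq1 ENNReal.ofReal_ne_top) henergy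
    rw [eLpNorm_eq_lintegral_rpow_enorm_toReal (ne_of_gt (ENNReal.ofReal_pos.2 (by linarith)))
      ENNReal.ofReal_ne_top]
    simp only [ENNReal.toReal_ofReal hq0]
    exact ENNReal.rpow_lt_top_of_nonneg (by positivity) hI.ne
  · -- inequality
    intro h hmeas hpos
    have hstep : ∀ x, ENNReal.ofReal (h x * ‖(D x).toReal • g x‖) =
        ENNReal.ofReal (h x) * (a x * (‖g x‖₊ : ℝ≥0∞)) := by
      intro x
      rw [ENNReal.ofReal_mul (hpos x), ofReal_norm_eq_coe_nnnorm, hnorm x]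
    calc ∫⁻ x, ENNReal.ofReal (h x * ‖(D x).toReal • g x‖) ∂μ
        = ∫⁻ x, ENNReal.ofReal (h x) * (a x * (‖g x‖₊ : ℝ≥0∞)) ∂μ :=
          lintegral_congr hstep
      _ ≤ ∫⁻ x, D x * (ENNReal.ofReal (h x) * (‖g x‖₊ : ℝ≥0∞)) ∂μ := by
          refine lintegral_mono fun x => ?_
          calc ENNReal.ofReal (h x) * (a x * (‖g x‖₊ : ℝ≥0∞))
              = a x * (ENNReal.ofReal (h x) * (‖g x‖₊ : ℝ≥0∞)) := by ring
            _ ≤ D x * (ENNReal.ofReal (h x) * (‖g x‖₊ : ℝ≥0∞)) :=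
              mul_le_mul_left (ha_le x) _
      _ ≤ ∫⁻ x, ENNReal.ofReal (h x) * (‖g x‖₊ : ℝ≥0∞) ∂ν :=
          hwd (hmeas.ennreal_ofReal.mul hg_sm.measurable.enorm)
      _ ≤ ∫⁻ x, ENNReal.ofReal (h x) * ∫⁻ p, (‖f p‖₊ : ℝ≥0∞) ∂(κ x) ∂ν :=
          lintegral_mono fun x => mul_le_mul_right (hgle x) _
      _ = ∫⁻ x, ∫⁻ p, ENNReal.ofReal (h x) * (‖f p‖₊ : ℝ≥0∞) ∂(κ x) ∂ν :=
          lintegral_congr fun x => (lintegral_const_mul _ hf_meas.enorm).symm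
      _ = ∫⁻ x, ∫⁻ p, ENNReal.ofReal (h (e p)) * (‖f p‖₊ : ℝ≥0∞) ∂(κ x) ∂ν := by
          refine lintegral_congr_ae ?_
          filter_upwards [hκconc] with x hx
          refine lintegral_congr_ae ?_
          have hae : ∀ᵐ p ∂(κ x), e p = x := by
            rw [ae_iff]
            exact hx
          filter_upwards [hae] with p hp
          rw [hp]
      _ = ∫⁻ p, ENNReal.ofReal (h (e p)) * (‖f p‖₊ : ℝ≥0∞) ∂piH :=
          (hlint_bind (((hmeas.comp he).ennreal_ofReal).mul hf_meas.enorm)).symm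
      _ = ∫⁻ p, ENNReal.ofReal (h (e p) * ‖f p‖) ∂piH :=
          lintegral_congr fun p => by
            rw [ENNReal.ofReal_mul (hpos _), ofReal_norm_eq_coe_nnnorm]

/-- Let `(B, μ)` be a weighted Banach space with the Radon–Nikodým
property (encoded by the a.e. differentiability of the curves charged by the plan),
`q ∈ (1, ∞)` and `π` a `q`-test plan.  With `π̂ = π ⊗ L¹|_{[0,1]}`, `ν = e_# π̂` and
`{π̂_x}_x` a disintegration of `π̂` along the evaluation map `e(γ,t) = γ_t`, the vector
field `v_π(x) = (dν/dμ)(x) ∫ γ'(t) dπ̂_x(γ,t)` belongs to `L^q(B, μ; B)` and satisfies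
`∫ h |v_π| dμ ≤ ∫∫₀¹ h(γ_t) ‖γ'(t)‖ dt dπ(γ)` for every nonnegative Borel `h`. -/
theorem vectorField_of_testPlan
    {B : Type*} [NormedAddCommGroup B] [NormedSpace ℝ B] [CompleteSpace B]
    [SeparableSpace B] [MeasurableSpace B] [BorelSpace B]
    (μ : Measure B) [IsFiniteMeasure μ]
    (q : ℝ) (hq : 1 < q)
    [MeasurableSpace C(ℝ, B)] [BorelSpace C(ℝ, B)]
    (π : Measure C(ℝ, B)) [IsProbabilityMeasure π]
    (Cc : ℝ) (hCc : 0 < Cc)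
    -- compression: `(e_t)_# π ≤ C μ` for every `t ∈ [0,1]`
    (hcomp : ∀ t ∈ Icc (0:ℝ) 1,
      Measure.map (fun γ : C(ℝ, B) => γ t) π ≤ ENNReal.ofReal Cc • μ)
    -- `π` is concentrated on absolutely continuous curves, a.e. differentiable on `[0,1]`,
    -- whose metric speed is the norm of the derivative
    (hAC : ∀ᵐ γ ∂π,
      (∀ᵐ t ∂(volume.restrict (Icc (0:ℝ) 1)), DifferentiableAt ℝ (fun r => γ r) t) ∧
      IntegrableOn (fun r => ‖deriv (fun r => γ r) r‖) (Icc (0:ℝ) 1) ∧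
      ∀ s ∈ Icc (0:ℝ) 1, ∀ t ∈ Icc (0:ℝ) 1, s ≤ t →
        ‖γ t - γ s‖ ≤ ∫ r in s..t, ‖deriv (fun r => γ r) r‖)
    -- finite kinetic `q`-energy
    (henergy : ∫⁻ pt, (‖deriv (fun r => pt.1 r) pt.2‖₊ : ℝ≥0∞) ^ q
        ∂(π.prod (volume.restrict (Icc (0:ℝ) 1))) < ⊤)
    -- disintegration `π̂ = ∫ π̂_x dν(x)` of `π̂` along `e`
    (κ : B → Measure (C(ℝ, B) × ℝ)) (hκprob : ∀ x, IsProbabilityMeasure (κ x))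
    (hκmeas : ∀ s : Set (C(ℝ, B) × ℝ), MeasurableSet s → Measurable fun x => κ x s)
    (hκconc : ∀ᵐ x ∂(Measure.map (fun pt : C(ℝ, B) × ℝ => pt.1 pt.2)
        (π.prod (volume.restrict (Icc (0:ℝ) 1)))), κ x {pt | pt.1 pt.2 ≠ x} = 0)
    (hκdis : ∀ s : Set (C(ℝ, B) × ℝ), MeasurableSet s →
      (π.prod (volume.restrict (Icc (0:ℝ) 1))) s =
        ∫⁻ x, κ x s ∂(Measure.map (fun pt : C(ℝ, B) × ℝ => pt.1 pt.2)
          (π.prod (volume.restrict (Icc (0:ℝ) 1))))) :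
    MemLp (fun x =>
        ((Measure.map (fun pt : C(ℝ, B) × ℝ => pt.1 pt.2)
            (π.prod (volume.restrict (Icc (0:ℝ) 1)))).rnDeriv μ x).toReal •
          ∫ pt, deriv (fun r => pt.1 r) pt.2 ∂(κ x)) (ENNReal.ofReal q) μ ∧
    ∀ h : B → ℝ, Measurable h → (∀ x, 0 ≤ h x) →
      ∫⁻ x, ENNReal.ofReal (h x *
          ‖((Measure.map (fun pt : C(ℝ, B) × ℝ => pt.1 pt.2)
              (π.prod (volume.restrict (Icc (0:ℝ) 1)))).rnDeriv μ x).toReal •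
            ∫ pt, deriv (fun r => pt.1 r) pt.2 ∂(κ x)‖) ∂μ ≤
        ∫⁻ pt, ENNReal.ofReal (h (pt.1 pt.2) * ‖deriv (fun r => pt.1 r) pt.2‖)
          ∂(π.prod (volume.restrict (Icc (0:ℝ) 1))) := by
  have he_cont : Continuous (fun pt : C(ℝ, B) × ℝ => pt.1 pt.2) :=
    ContinuousEval.continuous_eval
  have he_meas : Measurable (fun pt : C(ℝ, B) × ℝ => pt.1 pt.2) := he_cont.measurable
  have hf_sm : StronglyMeasurable (fun pt : C(ℝ, B) × ℝ => deriv (fun r => pt.1 r) pt.2) :=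
    stronglyMeasurable_deriv_with_param (f := fun γ : C(ℝ, B) => (γ : ℝ → B)) he_cont
  haveI : IsProbabilityMeasure (volume.restrict (Icc (0:ℝ) 1)) :=
    ⟨by simp [Real.volume_Icc]⟩
  haveI : IsProbabilityMeasure (π.prod (volume.restrict (Icc (0:ℝ) 1))) := inferInstance
  have hle : Measure.map (fun pt : C(ℝ, B) × ℝ => pt.1 pt.2)
      (π.prod (volume.restrict (Icc (0:ℝ) 1))) ≤ ENNReal.ofReal Cc • μ := by
    refine Measure.le_iff.2 fun s hs => ?_
    rw [Measure.map_apply he_meas hs,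
      Measure.prod_apply_symm (he_meas hs)]
    have hb : ∫⁻ t, π ((fun γ : C(ℝ, B) => (γ, t)) ⁻¹'
            ((fun pt : C(ℝ, B) × ℝ => pt.1 pt.2) ⁻¹' s))
          ∂(volume.restrict (Icc (0:ℝ) 1))
        ≤ ∫⁻ _t, (ENNReal.ofReal Cc • μ) s ∂(volume.restrict (Icc (0:ℝ) 1)) := by
      refine lintegral_mono_ae (((ae_restrict_mem measurableSet_Icc)).mono fun t ht => ?_)
      have hpre : (fun γ : C(ℝ, B) => (γ, t)) ⁻¹'
          ((fun pt : C(ℝ, B) × ℝ => pt.1 pt.2) ⁻¹' s) = (fun γ : C(ℝ, B) => γ t) ⁻¹' s := rfl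
      rw [hpre, ← Measure.map_apply (ContinuousEvalConst.continuous_eval_const t).measurable hs]
      exact Measure.le_iff'.1 (hcomp t ht) s
    refine hb.trans ?_
    rw [lintegral_const, Measure.restrict_apply_univ, Real.volume_Icc]
    simp
  exact vf_aux μ q hq (π.prod (volume.restrict (Icc (0:ℝ) 1))) _ he_meas _ hf_sm Cc hCc hle
    henergy κ hκprob hκmeas hκconc hκdis
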